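/- For an integrable function f : ℝ² → ℝ, the 2D Fourier transform of f evaluated at the point λ·n(φ), where n(φ) = (cos φ, sin φ) and λ ∈ ℝ, equals the 1D Fourier transform (in the radial variable τ) of the Radon transform R[f](τ, φ) = ∫_{ℝ²} f(x) δ(τ − ⟨n(φ), x⟩) dx; equivalently, ∫_{ℝ²} f(x) e^{−iλ⟨n(φ),x⟩} dx = ∫_ℝ e^{−iλτ} (∫_{⟨n(φ),x⟩=τ} f) dτ. (Fourier slice theorem in dimension 2.) -/

import Mathlib

open MeasureTheory Real Set

noncomputable def radon (f : ℝ × ℝ → ℂ) (τ φ : ℝ) : ℂ :=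
  ∫ s : ℝ, f (τ * Real.cos φ - s * Real.sin φ, τ * Real.sin φ + s * Real.cos φ)

noncomputable def rotL (φ : ℝ) : (ℝ × ℝ) →ₗ[ℝ] (ℝ × ℝ) where
  toFun x := (x.1 * Real.cos φ - x.2 * Real.sin φ, x.1 * Real.sin φ + x.2 * Real.cos φ)
  map_add' x y := by ext <;> simp <;> ring
  map_smul' c x := by ext <;> simp <;> ring

lemma rotL_det (φ : ℝ) : LinearMap.det (rotL φ) = 1 := by
  rw [← LinearMap.det_toMatrix (Module.Basis.finTwoProd ℝ), Matrix.det_fin_two]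
  simp [LinearMap.toMatrix_apply, rotL, Module.Basis.finTwoProd]
  linear_combination Real.sin_sq_add_cos_sq φ

lemma rotL_measurePreserving (φ : ℝ) :
    MeasurePreserving (rotL φ) (volume : Measure (ℝ × ℝ)) volume := by
  refine ⟨(rotL φ).continuous_of_finiteDimensional.measurable, ?_⟩
  rw [Measure.map_linearMap_addHaar_eq_smul_addHaar volume (by rw [rotL_det]; norm_num)]
  simp [rotL_det]

/-- Fourier slice theorem in dimension 2. -/
theorem fourier_slice (f : ℝ × ℝ → ℂ) (hf : Integrable f) (lam φ : ℝ) :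
    (∫ x : ℝ × ℝ, f x *
        Complex.exp (-Complex.I * (lam : ℂ) *
          ((Real.cos φ * x.1 + Real.sin φ * x.2 : ℝ) : ℂ)))
      = ∫ τ : ℝ, Complex.exp (-Complex.I * (lam : ℂ) * (τ : ℂ)) * radon f τ φ := by
  set g : ℝ × ℝ → ℂ := fun x => f x *
      Complex.exp (-Complex.I * (lam : ℂ) *
        ((Real.cos φ * x.1 + Real.sin φ * x.2 : ℝ) : ℂ)) with hg
  have hgint : Integrable g := by
    have hge : g = fun x => Complex.exp (-Complex.I * (lam : ℂ) *
        ((Real.cos φ * x.1 + Real.sin φ * x.2 : ℝ) : ℂ)) * f x := by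
      funext x; rw [hg]; ring
    rw [hge]
    apply hf.bdd_mul (c := 1)
    · apply Continuous.aestronglyMeasurable
      exact Complex.continuous_exp.comp (by continuity)
    · exact Filter.Eventually.of_forall (fun x => by
        rw [Complex.norm_exp]
        have : (-Complex.I * (lam : ℂ) *
            ((Real.cos φ * x.1 + Real.sin φ * x.2 : ℝ) : ℂ)).re = 0 := by
          simp [Complex.ext_iff]
        rw [this, Real.exp_zero])
  have hcomp : (∫ x : ℝ × ℝ, g x) = ∫ y : ℝ × ℝ, g (rotL φ y) :=
    ((rotL_measurePreserving φ).integral_comp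
      (((rotL φ).equivOfDetNeZero (by rw [rotL_det]; norm_num)).toContinuousLinearEquiv.toHomeomorph.measurableEmbedding) g).symm
  have hkey : ∀ τ s : ℝ, g (rotL φ (τ, s)) =
      Complex.exp (-Complex.I * (lam : ℂ) * (τ : ℂ)) *
        f (τ * Real.cos φ - s * Real.sin φ, τ * Real.sin φ + s * Real.cos φ) := by
    intro τ s
    have h1 : Real.cos φ * (τ * Real.cos φ - s * Real.sin φ)
        + Real.sin φ * (τ * Real.sin φ + s * Real.cos φ) = τ := by
      have := Real.sin_sq_add_cos_sq φ
      linear_combination τ * this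
    simp only [hg, rotL, LinearMap.coe_mk, AddHom.coe_mk, h1]
    ring
  have hgL : Integrable (fun y : ℝ × ℝ => g (rotL φ y)) := by
    rw [← hcomp] at *
    exact (rotL_measurePreserving φ).integrable_comp hgint.aestronglyMeasurable |>.mpr hgint
  rw [hcomp]
  rw [show (volume : Measure (ℝ × ℝ)) = (volume : Measure ℝ).prod volume from
    Measure.volume_eq_prod ℝ ℝ] at hgL ⊢
  rw [integral_prod _ hgL]
  congr 1 with τ
  simp only [hkey]
  rw [integral_const_mul]
  rfl
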